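/- Let X, U1, U2 be finite sets, c : X × U1 × U2 → ℝ a cost, and π ∈ Δ(X). Consider the Bayesian game where player 1 observes x ~ π and picks γ1 : X → Δ(U1), player 2 picks γ2 ∈ Δ(U2), and the payoff is c̃(π,γ1,γ2) = Σ_{x,u1,u2} π(x) γ1(x)(u1) γ2(u2) c(x,u1,u2). Then the game has a value: min_{γ1} max_{γ2} c̃ = max_{γ2} min_{γ1} c̃, and the value as a function of π is piecewise linear and convex (a maximum of finitely many linear functions of π). -/

import Mathlib

/-- The probability simplex over a finite set. -/
def probSet (S : Type*) [Fintype S] : Set (S → ℝ) :=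
  {p | (∀ s, 0 ≤ p s) ∧ ∑ s, p s = 1}

/-- Stochastic maps `X → Δ(U)`. -/
def prescSet (X U : Type*) [Fintype U] : Set (X → U → ℝ) :=
  {γ | ∀ x, (∀ u, 0 ≤ γ x u) ∧ ∑ u, γ x u = 1}

/-- Expected payoff of the stage Bayesian game:
`c̃(π,γ1,γ2) = Σ_{x,u1,u2} π(x) γ1(x)(u1) γ2(u2) c(x,u1,u2)`. -/
def bayesCost {X U1 U2 : Type*} [Fintype X] [Fintype U1] [Fintype U2]
    (c : X → U1 → U2 → ℝ) (π : X → ℝ) (γ1 : X → U1 → ℝ) (γ2 : U2 → ℝ) : ℝ :=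
  ∑ x, ∑ u1, ∑ u2, π x * γ1 x u1 * γ2 u2 * c x u1 u2

open Finset Bornology
open scoped RealInnerProductSpace Classical
set_option linter.unusedSectionVars false

namespace Stmt12


variable {n : Type*} [Fintype n]

noncomputable def ip (a y : EuclideanSpace ℝ n) : ℝ := ∑ i, a i * y i

lemma ip_eq_inner (a y : EuclideanSpace ℝ n) : ip a y = ⟪a, y⟫ := by
  simp [ip, PiLp.inner_apply, RCLike.inner_apply, starRingEnd_apply, mul_comm]

lemma ip_add_smul (a y d : EuclideanSpace ℝ n) (t : ℝ) :
    ip a (y + t • d) = ip a y + t * ip a d := by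
  simp only [ip_eq_inner, inner_add_right, inner_smul_right]

lemma ip_neg (a d : EuclideanSpace ℝ n) : ip a (-d) = -ip a d := by
  simp only [ip_eq_inner, inner_neg_right]

lemma continuous_ip (w : EuclideanSpace ℝ n) : Continuous fun y => ip w y := by
  have : (fun y => ip w y) = fun y : EuclideanSpace ℝ n => ⟪w, y⟫ := by
    funext y; exact ip_eq_inner w y
  rw [this]
  exact continuous_const.inner continuous_id

lemma exists_perp {S : Set (EuclideanSpace ℝ n)} (h : Submodule.span ℝ S ≠ ⊤) :
    ∃ d : EuclideanSpace ℝ n, d ≠ 0 ∧ ∀ v ∈ S, ip v d = 0 := by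
  have hbot : (Submodule.span ℝ S)ᗮ ≠ ⊥ := by
    intro hb
    exact h (Submodule.orthogonal_eq_bot_iff.mp hb)
  obtain ⟨d, hd, hd0⟩ := Submodule.exists_mem_ne_zero_of_ne_bot hbot
  refine ⟨d, hd0, fun v hv => ?_⟩
  rw [ip_eq_inner]
  exact (Submodule.mem_orthogonal _ d).mp hd v (Submodule.subset_span hv)

lemma eq_of_tight_span {m : Type*} (a : m → EuclideanSpace ℝ n) (b : m → ℝ)
    (S : Finset m) (hS : Submodule.span ℝ (a '' S) = ⊤)
    {y y' : EuclideanSpace ℝ n} (h : ∀ i ∈ S, ip (a i) y = b i)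
    (h' : ∀ i ∈ S, ip (a i) y' = b i) : y = y' := by
  have key : ∀ u ∈ Submodule.span ℝ (a '' S), ⟪u, y - y'⟫ = 0 := by
    intro u hu
    induction hu using Submodule.span_induction with
    | mem v hv =>
      obtain ⟨i, hi, rfl⟩ := hv
      rw [inner_sub_right, ← ip_eq_inner, ← ip_eq_inner, h i hi, h' i hi, sub_self]
    | zero => exact inner_zero_left _
    | add u v _ _ h1 h2 => rw [inner_add_left, h1, h2, add_zero]
    | smul t u _ h1 => rw [real_inner_smul_left, h1, mul_zero]
  have : ⟪y - y', y - y'⟫ = 0 := key _ (hS ▸ Submodule.mem_top)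
  have := inner_self_eq_zero.mp this
  linear_combination (norm := abel) this

variable {m : Type*} [Fintype m]

def memP (a : m → EuclideanSpace ℝ n) (b : m → ℝ) (y : EuclideanSpace ℝ n) : Prop :=
  ∀ i, ip (a i) y ≤ b i

noncomputable def tightSet (a : m → EuclideanSpace ℝ n) (b : m → ℝ)
    (y : EuclideanSpace ℝ n) : Finset m :=
  univ.filter (fun i => ip (a i) y = b i)

lemma exists_pos_ip {a : m → EuclideanSpace ℝ n} {b : m → ℝ}
    (hbd : IsBounded {y | memP a b y}) {y0 : EuclideanSpace ℝ n} (hy0 : memP a b y0)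
    {d : EuclideanSpace ℝ n} (hd : d ≠ 0) : ∃ i, 0 < ip (a i) d := by
  by_contra hcon
  push_neg at hcon
  obtain ⟨R, hR⟩ := isBounded_iff_forall_norm_le.mp hbd
  have hdn : (0:ℝ) < ‖d‖ := norm_pos_iff.mpr hd
  set t : ℝ := (R + ‖y0‖ + 1) / ‖d‖ with ht
  have htpos : 0 ≤ t := by
    have h0 := hR y0 hy0
    have h1 := norm_nonneg y0
    apply div_nonneg (by linarith) hdn.le
  have hmem : memP a b (y0 + t • d) := by
    intro i
    rw [ip_add_smul]
    have : t * ip (a i) d ≤ 0 := mul_nonpos_of_nonneg_of_nonpos htpos (hcon i)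
    have := hy0 i
    linarith
  have hnorm := hR _ hmem
  have h1 : ‖t • d‖ ≤ ‖y0 + t • d‖ + ‖y0‖ := by
    have h2 := norm_sub_le (y0 + t • d) y0
    rwa [add_sub_cancel_left] at h2
  rw [norm_smul, Real.norm_eq_abs, abs_of_nonneg htpos, ht, div_mul_cancel₀ _ (ne_of_gt hdn)] at h1
  linarith

lemma step_lemma {a : m → EuclideanSpace ℝ n} {b : m → ℝ} {w : EuclideanSpace ℝ n}
    (hbd : IsBounded {y | memP a b y}) {y : EuclideanSpace ℝ n} (hy : memP a b y)
    (hmax : ∀ z, memP a b z → ip w z ≤ ip w y)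
    (hspan : Submodule.span ℝ (a '' (tightSet a b y : Set m)) ≠ ⊤) :
    ∃ y', memP a b y' ∧ ip w y' = ip w y ∧ tightSet a b y ⊂ tightSet a b y' := by
  obtain ⟨d, hd0, hdperp⟩ := exists_perp hspan
  have hperp : ∀ i ∈ tightSet a b y, ip (a i) d = 0 := by
    intro i hi
    exact hdperp _ ⟨i, by simpa using hi, rfl⟩
  -- key move construction
  have key : ∀ e : EuclideanSpace ℝ n, e ≠ 0 → (∀ i ∈ tightSet a b y, ip (a i) e = 0) →
      ∃ t : ℝ, 0 < t ∧ memP a b (y + t • e) ∧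
        ∃ i0, i0 ∉ tightSet a b y ∧ i0 ∈ tightSet a b (y + t • e) ∧
          ∀ i ∈ tightSet a b y, i ∈ tightSet a b (y + t • e) := by
    intro e he0 hperpe
    obtain ⟨j, hj⟩ := exists_pos_ip hbd hy he0
    set Ip : Finset m := univ.filter (fun i => 0 < ip (a i) e) with hIp
    have hIpne : Ip.Nonempty := ⟨j, by simp [hIp, hj]⟩
    obtain ⟨i0, hi0Ip, hi0min⟩ :=
      Finset.exists_min_image Ip (fun i => (b i - ip (a i) y) / ip (a i) e) hIpne
    have hi0pos : 0 < ip (a i0) e := by simpa [hIp] using hi0Ip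
    have hi0nt : i0 ∉ tightSet a b y := by
      intro hmem
      rw [hperpe i0 hmem] at hi0pos
      exact lt_irrefl _ hi0pos
    have hi0lt : ip (a i0) y < b i0 := by
      rcases lt_or_eq_of_le (hy i0) with h | h
      · exact h
      · exact absurd (by simp [tightSet, h]) hi0nt
    set t : ℝ := (b i0 - ip (a i0) y) / ip (a i0) e with htdef
    have htpos : 0 < t := div_pos (by linarith) hi0pos
    have hteq : ip (a i0) (y + t • e) = b i0 := by
      rw [ip_add_smul, htdef, div_mul_cancel₀ _ (ne_of_gt hi0pos)]
      ring
    have hmem : memP a b (y + t • e) := by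
      intro i
      rw [ip_add_smul]
      rcases le_or_gt (ip (a i) e) 0 with h | h
      · have : t * ip (a i) e ≤ 0 := mul_nonpos_of_nonneg_of_nonpos (le_of_lt htpos) h
        have := hy i
        linarith
      · have hiIp : i ∈ Ip := by simp [hIp, h]
        have := hi0min i hiIp
        have h2 : t * ip (a i) e ≤ b i - ip (a i) y := by
          rw [le_div_iff₀ h] at this
          linarith
        linarith
    refine ⟨t, htpos, hmem, i0, hi0nt, by simp [tightSet, hteq], ?_⟩
    intro i hi
    have hbi : ip (a i) y = b i := by simpa [tightSet] using hi
    simp [tightSet, ip_add_smul, hperpe i hi, hbi]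
  obtain ⟨t1, ht1, hmem1, i0, hi0a, hi0b, hsub1⟩ := key d hd0 hperp
  have hperpn : ∀ i ∈ tightSet a b y, ip (a i) (-d) = 0 := by
    intro i hi; rw [ip_neg, hperp i hi, neg_zero]
  obtain ⟨t2, ht2, hmem2, _, _, _, _⟩ := key (-d) (by simpa using hd0) hperpn
  have hwd1 : ip w d ≤ 0 := by
    have := hmax _ hmem1
    rw [ip_add_smul] at this
    nlinarith
  have hwd2 : 0 ≤ ip w d := by
    have := hmax _ hmem2
    rw [ip_add_smul, ip_neg] at this
    nlinarith
  have hwd : ip w d = 0 := le_antisymm hwd1 hwd2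
  refine ⟨y + t1 • d, hmem1, by rw [ip_add_smul, hwd, mul_zero, add_zero], ?_⟩
  exact (Finset.ssubset_iff_of_subset hsub1).mpr ⟨i0, hi0b, hi0a⟩

lemma exists_max_vertex {a : m → EuclideanSpace ℝ n} {b : m → ℝ}
    (hbd : IsBounded {y | memP a b y}) (hne : ∃ y, memP a b y) (w : EuclideanSpace ℝ n) :
    ∃ y, memP a b y ∧ (∀ z, memP a b z → ip w z ≤ ip w y) ∧
      ∃ S : Finset m, Submodule.span ℝ (a '' (S : Set m)) = ⊤ ∧ ∀ i ∈ S, ip (a i) y = b i := by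
  -- compactness
  have hclosed : IsClosed {y : EuclideanSpace ℝ n | memP a b y} := by
    have : {y : EuclideanSpace ℝ n | memP a b y} = ⋂ i, {y | ip (a i) y ≤ b i} := by
      ext y; simp [memP, Set.mem_iInter]
    rw [this]
    exact isClosed_iInter fun i => isClosed_le (continuous_ip (a i)) continuous_const
  have hcomp : IsCompact {y : EuclideanSpace ℝ n | memP a b y} :=
    Metric.isCompact_of_isClosed_isBounded hclosed hbd
  obtain ⟨y0, hy0, hy0max⟩ := hcomp.exists_isMaxOn hne ((continuous_ip w).continuousOn)
  have hy0max' : ∀ z, memP a b z → ip w z ≤ ip w y0 := fun z hz => hy0max hz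
  -- induction on slack
  have main : ∀ k, ∀ y, memP a b y → (∀ z, memP a b z → ip w z ≤ ip w y) →
      Fintype.card m - (tightSet a b y).card ≤ k →
      ∃ y', memP a b y' ∧ (∀ z, memP a b z → ip w z ≤ ip w y') ∧
        ∃ S : Finset m, Submodule.span ℝ (a '' (S : Set m)) = ⊤ ∧ ∀ i ∈ S, ip (a i) y' = b i := by
    intro k
    induction k with
    | zero =>
      intro y hy hmax hcard
      by_cases hs : Submodule.span ℝ (a '' (tightSet a b y : Set m)) = ⊤
      · exact ⟨y, hy, hmax, tightSet a b y, hs, fun i hi => by simpa [tightSet] using hi⟩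
      · obtain ⟨y', hy', hweq, hss⟩ := step_lemma hbd hy hmax hs
        have h1 := Finset.card_lt_card hss
        have h2 := Finset.card_le_univ (tightSet a b y')
        omega
    | succ k ih =>
      intro y hy hmax hcard
      by_cases hs : Submodule.span ℝ (a '' (tightSet a b y : Set m)) = ⊤
      · exact ⟨y, hy, hmax, tightSet a b y, hs, fun i hi => by simpa [tightSet] using hi⟩
      · obtain ⟨y', hy', hweq, hss⟩ := step_lemma hbd hy hmax hs
        have hmax' : ∀ z, memP a b z → ip w z ≤ ip w y' := fun z hz => hweq ▸ hmax z hz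
        have h1 := Finset.card_lt_card hss
        have h2 := Finset.card_le_univ (tightSet a b y')
        exact ih y' hy' hmax' (by omega)
  exact main (Fintype.card m) y0 hy0 hy0max' (by omega)

noncomputable def cand (a : m → EuclideanSpace ℝ n) (b : m → ℝ) :
    Finset (EuclideanSpace ℝ n) :=
  univ.image (fun S : Finset m =>
    if h : ∃ y, ∀ i ∈ S, ip (a i) y = b i then h.choose else 0)

lemma mem_cand {a : m → EuclideanSpace ℝ n} {b : m → ℝ} {y : EuclideanSpace ℝ n}
    (S : Finset m) (hS : Submodule.span ℝ (a '' (S : Set m)) = ⊤)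
    (hy : ∀ i ∈ S, ip (a i) y = b i) : y ∈ cand a b := by
  rw [cand, Finset.mem_image]
  refine ⟨S, Finset.mem_univ _, ?_⟩
  rw [dif_pos ⟨y, hy⟩]
  exact eq_of_tight_span a b S hS (Exists.choose_spec (⟨y, hy⟩ : ∃ y, ∀ i ∈ S, ip (a i) y = b i)) hy



variable {X U1 U2 : Type*} [Fintype X] [Fintype U1] [Fintype U2]
  [Nonempty X] [Nonempty U1] [Nonempty U2]

section Defs
variable (c : X → U1 → U2 → ℝ)

noncomputable def Mc : ℝ := ∑ x, ∑ u1, ∑ u2, |c x u1 u2|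

def dotc (x : X) (u1 : U1) (γ2 : U2 → ℝ) : ℝ := ∑ u2, c x u1 u2 * γ2 u2

noncomputable def mMin (x : X) (γ2 : U2 → ℝ) : ℝ :=
  univ.inf' univ_nonempty (fun u1 => dotc c x u1 γ2)

def gEx (π : X → ℝ) (γ1 : X → U1 → ℝ) (u2 : U2) : ℝ :=
  ∑ x, ∑ u1, π x * γ1 x u1 * c x u1 u2

noncomputable def Fmax (π : X → ℝ) (γ1 : X → U1 → ℝ) : ℝ :=
  univ.sup' univ_nonempty (fun u2 => gEx c π γ1 u2)

end Defs

variable {c : X → U1 → U2 → ℝ}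

lemma Mc_nonneg : 0 ≤ Mc c := by
  apply Finset.sum_nonneg; intro x _
  apply Finset.sum_nonneg; intro u1 _
  exact Finset.sum_nonneg fun u2 _ => abs_nonneg _

lemma sum_abs_c_le (x : X) (u1 : U1) : ∑ u2, |c x u1 u2| ≤ Mc c := by
  have h1 : ∑ u2, |c x u1 u2| ≤ ∑ u1', ∑ u2, |c x u1' u2| :=
    Finset.single_le_sum (f := fun u1' => ∑ u2, |c x u1' u2|)
      (fun i _ => Finset.sum_nonneg fun u2 _ => abs_nonneg _) (mem_univ u1)
  have h2 : ∑ u1', ∑ u2, |c x u1' u2| ≤ Mc c :=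
    Finset.single_le_sum (f := fun x' => ∑ u1', ∑ u2, |c x' u1' u2|)
      (fun i _ => Finset.sum_nonneg fun _ _ => Finset.sum_nonneg fun _ _ => abs_nonneg _)
      (mem_univ x)
  linarith

lemma prob_le_one {p : U2 → ℝ} (hp : p ∈ probSet U2) (u : U2) : p u ≤ 1 := by
  rcases hp with ⟨h0, h1⟩
  calc p u ≤ ∑ u', p u' := Finset.single_le_sum (fun i _ => h0 i) (mem_univ u)
  _ = 1 := h1

lemma abs_dotc_le {γ2 : U2 → ℝ} (hγ2 : γ2 ∈ probSet U2) (x : X) (u1 : U1) :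
    |dotc c x u1 γ2| ≤ Mc c := by
  refine le_trans (Finset.abs_sum_le_sum_abs _ _) (le_trans ?_ (sum_abs_c_le x u1))
  apply Finset.sum_le_sum; intro u2 _
  rw [abs_mul, abs_of_nonneg (hγ2.1 u2)]
  calc |c x u1 u2| * γ2 u2 ≤ |c x u1 u2| * 1 :=
        mul_le_mul_of_nonneg_left (prob_le_one hγ2 u2) (abs_nonneg _)
  _ = |c x u1 u2| := mul_one _

lemma mMin_le_dotc (x : X) (γ2 : U2 → ℝ) (u1 : U1) : mMin c x γ2 ≤ dotc c x u1 γ2 :=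
  Finset.inf'_le _ (mem_univ u1)

lemma exists_mMin (x : X) (γ2 : U2 → ℝ) : ∃ u1, mMin c x γ2 = dotc c x u1 γ2 := by
  obtain ⟨u1, _, h⟩ := Finset.exists_mem_eq_inf' (univ_nonempty) (fun u1 => dotc c x u1 γ2)
  exact ⟨u1, h⟩

lemma abs_mMin_le {γ2 : U2 → ℝ} (hγ2 : γ2 ∈ probSet U2) (x : X) : |mMin c x γ2| ≤ Mc c := by
  obtain ⟨u1, h⟩ := exists_mMin (c := c) x γ2
  rw [h]; exact abs_dotc_le hγ2 x u1

lemma bayes_eq1 (π : X → ℝ) (γ1 : X → U1 → ℝ) (γ2 : U2 → ℝ) :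
    bayesCost c π γ1 γ2 = ∑ x, π x * ∑ u1, γ1 x u1 * dotc c x u1 γ2 := by
  unfold bayesCost dotc
  simp only [Finset.mul_sum]
  exact Finset.sum_congr rfl fun x _ => Finset.sum_congr rfl fun u1 _ =>
    Finset.sum_congr rfl fun u2 _ => by ring

lemma bayes_eq2 (π : X → ℝ) (γ1 : X → U1 → ℝ) (γ2 : U2 → ℝ) :
    bayesCost c π γ1 γ2 = ∑ u2, γ2 u2 * gEx c π γ1 u2 := by
  unfold bayesCost gEx
  have h1 : ∀ x : X, ∑ u1, ∑ u2, π x * γ1 x u1 * γ2 u2 * c x u1 u2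
      = ∑ u2, ∑ u1, π x * γ1 x u1 * γ2 u2 * c x u1 u2 := fun x => Finset.sum_comm
  rw [Finset.sum_congr rfl fun x _ => h1 x, Finset.sum_comm]
  simp only [Finset.mul_sum]
  exact Finset.sum_congr rfl fun u2 _ => Finset.sum_congr rfl fun x _ =>
    Finset.sum_congr rfl fun u1 _ => by ring

lemma abs_c_le (x : X) (u1 : U1) (u2 : U2) : |c x u1 u2| ≤ Mc c := by
  have h1 : |c x u1 u2| ≤ ∑ u2', |c x u1 u2'| :=
    Finset.single_le_sum (f := fun u2' => |c x u1 u2'|) (fun i _ => abs_nonneg _) (mem_univ u2)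
  linarith [sum_abs_c_le (c := c) x u1]

lemma abs_gEx_le {π : X → ℝ} {γ1 : X → U1 → ℝ} (hπ : π ∈ probSet X)
    (hγ1 : γ1 ∈ prescSet X U1) (u2 : U2) : |gEx c π γ1 u2| ≤ Mc c := by
  have step1 : |gEx c π γ1 u2| ≤ ∑ x, ∑ u1, |π x * γ1 x u1 * c x u1 u2| := by
    refine le_trans (Finset.abs_sum_le_sum_abs _ _) (Finset.sum_le_sum fun x _ => ?_)
    exact Finset.abs_sum_le_sum_abs _ _
  have step2 : ∀ (x : X) (u1 : U1), |π x * γ1 x u1 * c x u1 u2| ≤ π x * γ1 x u1 * Mc c := by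
    intro x u1
    rw [abs_mul, abs_mul, abs_of_nonneg (hπ.1 x), abs_of_nonneg ((hγ1 x).1 u1)]
    exact mul_le_mul_of_nonneg_left (abs_c_le x u1 u2) (mul_nonneg (hπ.1 x) ((hγ1 x).1 u1))
  have step3 : ∑ x, ∑ u1, π x * γ1 x u1 * Mc c = Mc c := by
    have hx : ∀ x : X, ∑ u1, π x * γ1 x u1 * Mc c = π x * Mc c := by
      intro x
      have : ∑ u1, π x * γ1 x u1 * Mc c = (π x * Mc c) * ∑ u1, γ1 x u1 := by
        rw [Finset.mul_sum]
        exact Finset.sum_congr rfl fun u1 _ => by ring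
      rw [this, (hγ1 x).2, mul_one]
    rw [Finset.sum_congr rfl fun x _ => hx x, ← Finset.sum_mul, hπ.2, one_mul]
  calc |gEx c π γ1 u2| ≤ ∑ x, ∑ u1, |π x * γ1 x u1 * c x u1 u2| := step1
  _ ≤ ∑ x, ∑ u1, π x * γ1 x u1 * Mc c :=
      Finset.sum_le_sum fun x _ => Finset.sum_le_sum fun u1 _ => step2 x u1
  _ = Mc c := step3

lemma abs_bayes_le {π : X → ℝ} {γ1 : X → U1 → ℝ} {γ2 : U2 → ℝ} (hπ : π ∈ probSet X)
    (hγ1 : γ1 ∈ prescSet X U1) (hγ2 : γ2 ∈ probSet U2) : |bayesCost c π γ1 γ2| ≤ Mc c := by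
  rw [bayes_eq2]
  calc |∑ u2, γ2 u2 * gEx c π γ1 u2| ≤ ∑ u2, |γ2 u2 * gEx c π γ1 u2| :=
        Finset.abs_sum_le_sum_abs _ _
  _ ≤ ∑ u2, γ2 u2 * Mc c := by
      apply Finset.sum_le_sum; intro u2 _
      rw [abs_mul, abs_of_nonneg (hγ2.1 u2)]
      exact mul_le_mul_of_nonneg_left (abs_gEx_le hπ hγ1 u2) (hγ2.1 u2)
  _ = Mc c := by rw [← Finset.sum_mul, hγ2.2, one_mul]

lemma uniform_mem_prob (S : Type*) [Fintype S] [Nonempty S] :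
    (fun _ : S => (1 : ℝ) / Fintype.card S) ∈ probSet S := by
  constructor
  · intro s; positivity
  · rw [Finset.sum_const, Finset.card_univ, nsmul_eq_mul]
    field_simp

lemma uniform_mem_presc : (fun (_ : X) (_ : U1) => (1 : ℝ) / Fintype.card U1) ∈ prescSet X U1 :=
  fun _ => uniform_mem_prob U1

instance : Nonempty (probSet U2) := ⟨⟨_, uniform_mem_prob U2⟩⟩
instance : Nonempty (prescSet X U1) := ⟨⟨_, uniform_mem_presc⟩⟩

lemma le_mMin {r : ℝ} {x : X} {γ2 : U2 → ℝ} (h : ∀ u1, r ≤ dotc c x u1 γ2) :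
    r ≤ mMin c x γ2 :=
  Finset.le_inf' _ _ fun u1 _ => h u1

lemma bayes_ge {π : X → ℝ} (hπ : π ∈ probSet X) {γ1 : X → U1 → ℝ}
    (hγ1 : γ1 ∈ prescSet X U1) (γ2 : U2 → ℝ) :
    ∑ x, π x * mMin c x γ2 ≤ bayesCost c π γ1 γ2 := by
  rw [bayes_eq1]
  apply Finset.sum_le_sum; intro x _
  apply mul_le_mul_of_nonneg_left ?_ (hπ.1 x)
  calc mMin c x γ2 = (∑ u1, γ1 x u1) * mMin c x γ2 := by rw [(hγ1 x).2, one_mul]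
  _ = ∑ u1, γ1 x u1 * mMin c x γ2 := Finset.sum_mul ..
  _ ≤ ∑ u1, γ1 x u1 * dotc c x u1 γ2 :=
      Finset.sum_le_sum fun u1 _ =>
        mul_le_mul_of_nonneg_left (mMin_le_dotc x γ2 u1) ((hγ1 x).1 u1)

lemma exists_det_γ1 (γ2 : U2 → ℝ) (π : X → ℝ) :
    ∃ γ1 ∈ prescSet X U1, bayesCost c π γ1 γ2 = ∑ x, π x * mMin c x γ2 := by
  have hs : ∀ x : X, ∃ u1, mMin c x γ2 = dotc c x u1 γ2 := fun x => exists_mMin x γ2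
  choose s hsp using hs
  refine ⟨fun x u1 => if u1 = s x then 1 else 0, ?_, ?_⟩
  · intro x
    constructor
    · intro u1; dsimp only; split <;> norm_num
    · simp
  · rw [bayes_eq1]
    apply Finset.sum_congr rfl; intro x _
    congr 1
    simp [ite_mul, Finset.sum_ite_eq', hsp x]

lemma innerInf_eq {π : X → ℝ} (hπ : π ∈ probSet X) (γ2 : U2 → ℝ) :
    (⨅ γ1 : prescSet X U1, bayesCost c π γ1 γ2) = ∑ x, π x * mMin c x γ2 := by
  apply le_antisymm
  · obtain ⟨γ1, hγ1, heq⟩ := exists_det_γ1 (c := c) γ2 π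
    have := ciInf_le (f := fun γ1 : prescSet X U1 => bayesCost c π γ1 γ2)
      ⟨∑ x, π x * mMin c x γ2, by rintro r ⟨γ1', rfl⟩; exact bayes_ge hπ γ1'.2 γ2⟩
      ⟨γ1, hγ1⟩
    rwa [heq] at this
  · exact le_ciInf fun γ1 => bayes_ge hπ γ1.2 γ2

lemma bayes_le_Fmax {γ2 : U2 → ℝ} (hγ2 : γ2 ∈ probSet U2) (π : X → ℝ) (γ1 : X → U1 → ℝ) :
    bayesCost c π γ1 γ2 ≤ Fmax c π γ1 := by
  rw [bayes_eq2]
  calc ∑ u2, γ2 u2 * gEx c π γ1 u2 ≤ ∑ u2, γ2 u2 * Fmax c π γ1 :=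
        Finset.sum_le_sum fun u2 _ =>
          mul_le_mul_of_nonneg_left (Finset.le_sup' _ (mem_univ u2)) (hγ2.1 u2)
  _ = Fmax c π γ1 := by rw [← Finset.sum_mul, hγ2.2, one_mul]

lemma exists_pure_γ2 (π : X → ℝ) (γ1 : X → U1 → ℝ) :
    ∃ γ2 ∈ probSet U2, bayesCost c π γ1 γ2 = Fmax c π γ1 := by
  obtain ⟨u2m, _, hm⟩ := Finset.exists_mem_eq_sup' (univ_nonempty) (fun u2 => gEx c π γ1 u2)
  refine ⟨fun u2 => if u2 = u2m then 1 else 0,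
    ⟨fun u2 => by dsimp only; split <;> norm_num, by simp⟩, ?_⟩
  rw [bayes_eq2]
  simp [ite_mul, Finset.sum_ite_eq', Fmax, hm]

lemma iSup_eq (π : X → ℝ) (γ1 : X → U1 → ℝ) :
    (⨆ γ2 : probSet U2, bayesCost c π γ1 γ2) = Fmax c π γ1 := by
  apply le_antisymm
  · exact ciSup_le fun γ2 => bayes_le_Fmax γ2.2 π γ1
  · obtain ⟨γ2, hγ2, heq⟩ := exists_pure_γ2 (c := c) π γ1
    have := le_ciSup (f := fun γ2 : probSet U2 => bayesCost c π γ1 γ2)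
      ⟨Fmax c π γ1, by rintro r ⟨γ2', rfl⟩; exact bayes_le_Fmax γ2'.2 π γ1⟩
      ⟨γ2, hγ2⟩
    rwa [heq] at this

variable (c) in
noncomputable def lowVal (π : X → ℝ) : ℝ :=
  ⨆ γ2 : probSet U2, ⨅ γ1 : prescSet X U1, bayesCost c π γ1 γ2

lemma bddBelow_bayes {π : X → ℝ} (hπ : π ∈ probSet X) (γ2 : probSet U2) :
    BddBelow (Set.range fun γ1 : prescSet X U1 => bayesCost c π γ1 γ2) := by
  refine ⟨-Mc c, ?_⟩
  rintro r ⟨γ1, rfl⟩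
  have := abs_bayes_le (c := c) hπ γ1.2 γ2.2
  have := neg_abs_le (bayesCost c π γ1 γ2)
  dsimp only
  linarith

lemma bddAbove_inner {π : X → ℝ} (hπ : π ∈ probSet X) :
    BddAbove (Set.range fun γ2 : probSet U2 =>
      ⨅ γ1 : prescSet X U1, bayesCost c π γ1 γ2) := by
  refine ⟨Mc c, ?_⟩
  rintro r ⟨γ2, rfl⟩
  obtain ⟨γ1u⟩ := (inferInstance : Nonempty (prescSet X U1))
  refine le_trans (ciInf_le (bddBelow_bayes hπ γ2) γ1u) ?_
  have := abs_bayes_le (c := c) hπ γ1u.2 γ2.2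
  have := le_abs_self (bayesCost c π γ1u γ2)
  linarith

lemma bddAbove_bayes {π : X → ℝ} (hπ : π ∈ probSet X) (γ1 : prescSet X U1) :
    BddAbove (Set.range fun γ2 : probSet U2 => bayesCost c π γ1 γ2) := by
  refine ⟨Mc c, ?_⟩
  rintro r ⟨γ2, rfl⟩
  have := abs_bayes_le (c := c) hπ γ1.2 γ2.2
  have := le_abs_self (bayesCost c π (γ1 : X → U1 → ℝ) γ2)
  dsimp only
  linarith

lemma bddBelow_Fmax {π : X → ℝ} (hπ : π ∈ probSet X) :
    BddBelow (Set.range fun γ1 : prescSet X U1 => Fmax c π (γ1 : X → U1 → ℝ)) := by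
  refine ⟨-Mc c, ?_⟩
  rintro r ⟨γ1, rfl⟩
  obtain ⟨u2⟩ := (inferInstance : Nonempty U2)
  have h1 : -Mc c ≤ gEx c π γ1 u2 := by
    have := abs_gEx_le (c := c) hπ γ1.2 u2
    have := neg_abs_le (gEx c π (γ1 : X → U1 → ℝ) u2)
    linarith
  exact le_trans h1 (Finset.le_sup' _ (mem_univ u2))

set_option maxHeartbeats 2000000 in
lemma minimax {π : X → ℝ} (hπ : π ∈ probSet X) :
    (⨅ γ1 : prescSet X U1, ⨆ γ2 : probSet U2, bayesCost c π γ1 γ2) = lowVal c π := by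
  have hLHS : (⨅ γ1 : prescSet X U1, ⨆ γ2 : probSet U2, bayesCost c π γ1 γ2)
      = ⨅ γ1 : prescSet X U1, Fmax c π (γ1 : X → U1 → ℝ) :=
    iInf_congr fun γ1 => iSup_eq (c := c) π γ1
  rw [hLHS]
  set v := ⨅ γ1 : prescSet X U1, Fmax c π (γ1 : X → U1 → ℝ) with hv
  apply le_antisymm
  · -- hard direction via separation
    set g : (X → U1 → ℝ) → (U2 → ℝ) := fun γ1 u2 => gEx c π γ1 u2 with hg
    set K : Set (U2 → ℝ) := g '' prescSet X U1 with hK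
    set O : Set (U2 → ℝ) := Set.univ.pi (fun _ : U2 => Set.Iio v) with hO
    have hmemO : ∀ z : U2 → ℝ, z ∈ O ↔ ∀ u2, z u2 < v := by
      intro z; rw [hO, Set.mem_pi]; simp
    have hOopen : IsOpen O := isOpen_set_pi Set.finite_univ (fun _ _ => isOpen_Iio)
    have hOconv : Convex ℝ O := convex_pi (fun _ _ => convex_Iio v)
    have hKconv : Convex ℝ K := by
      rintro z ⟨γ1, hγ1, rfl⟩ z' ⟨γ1', hγ1', rfl⟩ α β hα hβ hαβ
      refine ⟨fun x u1 => α * γ1 x u1 + β * γ1' x u1, ?_, ?_⟩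
      · intro x
        constructor
        · intro u1
          exact add_nonneg (mul_nonneg hα ((hγ1 x).1 u1)) (mul_nonneg hβ ((hγ1' x).1 u1))
        · rw [Finset.sum_add_distrib, ← Finset.mul_sum, ← Finset.mul_sum,
            (hγ1 x).2, (hγ1' x).2, mul_one, mul_one, hαβ]
      · funext u2
        simp only [Pi.add_apply, Pi.smul_apply, smul_eq_mul, hg]
        unfold gEx
        rw [Finset.mul_sum, Finset.mul_sum, ← Finset.sum_add_distrib]
        refine Finset.sum_congr rfl fun x _ => ?_
        rw [Finset.mul_sum, Finset.mul_sum, ← Finset.sum_add_distrib]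
        exact Finset.sum_congr rfl fun u1 _ => by ring
    have hdisj : Disjoint O K := by
      rw [Set.disjoint_left]
      rintro z hzO ⟨γ1, hγ1, rfl⟩
      obtain ⟨u2m, _, hm⟩ := Finset.exists_mem_eq_sup' (univ_nonempty) (fun u2 => gEx c π γ1 u2)
      have h1 : v ≤ Fmax c π γ1 := ciInf_le (bddBelow_Fmax hπ) (⟨γ1, hγ1⟩ : prescSet X U1)
      have h2 : g γ1 u2m < v := (hmemO _).mp hzO u2m
      have h3 : g γ1 u2m = Fmax c π γ1 := by rw [hg]; dsimp only; rw [Fmax, hm]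
      linarith
    obtain ⟨f, u, hfO, hfK⟩ := geometric_hahn_banach_open hOconv hOopen hKconv hdisj
    set e : U2 → (U2 → ℝ) := fun u2 => fun j => if u2 = j then 1 else 0 with he
    set φ : U2 → ℝ := fun u2 => f (e u2) with hφdef
    have hrepr : ∀ z : U2 → ℝ, f z = ∑ u2, z u2 * φ u2 := by
      intro z
      conv_lhs => rw [pi_eq_sum_univ z]
      rw [map_sum]
      exact Finset.sum_congr rfl fun u2 _ => by rw [map_smul, smul_eq_mul]
    have hz0 : (fun _ : U2 => v - 1) ∈ O := (hmemO _).mpr (fun u2 => by linarith)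
    have hfz0 : f (fun _ : U2 => v - 1) < u := hfO _ hz0
    have hφnn : ∀ u2, 0 ≤ φ u2 := by
      intro u2'
      by_contra hneg
      push_neg at hneg
      obtain ⟨t, ht⟩ : ∃ t : ℝ, t = (u - f (fun _ : U2 => v - 1)) / (-φ u2') + 1 := ⟨_, rfl⟩
      have htpos : 0 < t := by
        have h9 := div_pos (sub_pos.mpr hfz0) (neg_pos.mpr hneg)
        rw [ht]; linarith
      set a : U2 → ℝ := (fun _ : U2 => v - 1) - t • e u2' with ha
      have haO : a ∈ O := by
        refine (hmemO _).mpr (fun j => ?_)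
        have : (0:ℝ) ≤ t * e u2' j := by
          apply mul_nonneg htpos.le
          rw [he]; dsimp only; split <;> norm_num
        simp only [ha, Pi.sub_apply, Pi.smul_apply, smul_eq_mul]
        linarith
      have hfa : f a = f (fun _ : U2 => v - 1) - t * φ u2' := by
        rw [ha, map_sub, map_smul, smul_eq_mul, hφdef]
      have hta : t * (-φ u2') > u - f (fun _ : U2 => v - 1) := by
        have h5 : t * (-φ u2') = (u - f (fun _ : U2 => v - 1)) + (-φ u2') := by
          rw [ht, add_mul, div_mul_cancel₀ _ (ne_of_gt (neg_pos.mpr hneg)), one_mul]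
        rw [h5]
        linarith [neg_pos.mpr hneg]
      have := hfO a haO
      rw [hfa] at this
      linarith
    set T : ℝ := ∑ u2, φ u2 with hT
    have hT0 : 0 ≤ T := Finset.sum_nonneg fun u2 _ => hφnn u2
    have hKne : ∃ z, z ∈ K := ⟨g (fun _ _ => (1:ℝ)/Fintype.card U1), ⟨_, uniform_mem_presc, rfl⟩⟩
    have hTpos : 0 < T := by
      rcases lt_or_eq_of_le hT0 with h | h
      · exact h
      · exfalso
        have hall : ∀ u2 ∈ univ, φ u2 = 0 :=
          (Finset.sum_eq_zero_iff_of_nonneg (fun u2 _ => hφnn u2)).mp h.symm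
        have hf0 : ∀ z : U2 → ℝ, f z = 0 := by
          intro z
          rw [hrepr z]
          exact Finset.sum_eq_zero fun u2 _ => by rw [hall u2 (mem_univ u2), mul_zero]
        obtain ⟨z, hz⟩ := hKne
        have h1 := hfK z hz
        rw [hf0 z, hf0 (fun _ : U2 => v - 1)] at *
        linarith
    have hγ2mem : (fun u2 => φ u2 / T) ∈ probSet U2 := by
      constructor
      · intro u2; exact div_nonneg (hφnn u2) hT0
      · rw [← Finset.sum_div, ← hT, div_self (ne_of_gt hTpos)]
    have hvTu : v * T ≤ u := by
      by_contra hlt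
      push_neg at hlt
      obtain ⟨ε, hε⟩ : ∃ ε : ℝ, ε = (v * T - u) / (2 * T) := ⟨_, rfl⟩
      have hεpos : 0 < ε := by rw [hε]; exact div_pos (by linarith) (by linarith)
      have hzε : (fun _ : U2 => v - ε) ∈ O := (hmemO _).mpr (fun u2 => by linarith)
      have h1 := hfO _ hzε
      rw [hrepr] at h1
      have h2 : ∑ u2, (v - ε) * φ u2 = (v - ε) * T := by rw [← Finset.mul_sum, hT]
      rw [h2] at h1
      have h3 : ε * T = (v * T - u) / 2 := by
        rw [hε]; field_simp
      nlinarith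
    have hmain : ∀ γ1 : prescSet X U1, v ≤ bayesCost c π γ1 (fun u2 => φ u2 / T) := by
      intro γ1
      have h1 : u ≤ f (g γ1) := hfK _ ⟨γ1, γ1.2, rfl⟩
      have h2 : T * bayesCost c π γ1 (fun u2 => φ u2 / T) = f (g γ1) := by
        rw [bayes_eq2, hrepr, Finset.mul_sum]
        refine Finset.sum_congr rfl fun u2 _ => ?_
        rw [hg]; dsimp only
        field_simp
      have h3 : v * T ≤ T * bayesCost c π γ1 (fun u2 => φ u2 / T) := by
        rw [h2]; linarith
      rw [mul_comm] at h3
      exact le_of_mul_le_mul_right (by linarith) hTpos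
    calc v ≤ ⨅ γ1 : prescSet X U1, bayesCost c π γ1 (fun u2 => φ u2 / T) :=
          le_ciInf fun γ1 => hmain γ1
    _ ≤ lowVal c π := by
        exact le_ciSup_of_le (bddAbove_inner hπ) (⟨_, hγ2mem⟩ : probSet U2) le_rfl
  · -- weak duality
    refine ciSup_le fun γ2 => le_ciInf fun γ1 => ?_
    refine le_trans (ciInf_le (bddBelow_bayes hπ γ2) γ1) ?_
    rw [← iSup_eq (c := c) π (γ1 : X → U1 → ℝ)]
    exact le_ciSup (bddAbove_bayes hπ γ1) γ2

section Assembly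
variable (c : X → U1 → U2 → ℝ)

noncomputable def aRow : ((U2 ⊕ Bool) ⊕ ((X × U1) ⊕ X)) → EuclideanSpace ℝ (U2 ⊕ X)
  | .inl (.inl u2) => WithLp.toLp 2 (fun j : U2 ⊕ X => if j = .inl u2 then -1 else 0)
  | .inl (.inr true) => WithLp.toLp 2 (Sum.elim (fun _ => 1) (fun _ => 0))
  | .inl (.inr false) => WithLp.toLp 2 (Sum.elim (fun _ => -1) (fun _ => 0))
  | .inr (.inl (x, u1)) => WithLp.toLp 2 (Sum.elim (fun u2 => -(c x u1 u2)) (fun x' => if x' = x then 1 else 0))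
  | .inr (.inr x) => WithLp.toLp 2 (fun j : U2 ⊕ X => if j = .inr x then -1 else 0)

noncomputable def bRow : ((U2 ⊕ Bool) ⊕ ((X × U1) ⊕ X)) → ℝ
  | .inl (.inl _) => 0
  | .inl (.inr true) => 1
  | .inl (.inr false) => -1
  | .inr (.inl _) => 0
  | .inr (.inr _) => Mc c

variable {c}

lemma ip_row1 (u2 : U2) (y : EuclideanSpace ℝ (U2 ⊕ X)) :
    ip (aRow c (.inl (.inl u2))) y = -(y (.inl u2)) := by
  unfold ip aRow
  rw [Fintype.sum_sum_type]
  simp [ite_mul, Finset.sum_ite_eq']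

lemma ip_row2t (y : EuclideanSpace ℝ (U2 ⊕ X)) :
    ip (aRow c (.inl (.inr true))) y = ∑ u2, y (.inl u2) := by
  unfold ip aRow
  rw [Fintype.sum_sum_type]
  simp

lemma ip_row2f (y : EuclideanSpace ℝ (U2 ⊕ X)) :
    ip (aRow c (.inl (.inr false))) y = -∑ u2, y (.inl u2) := by
  unfold ip aRow
  rw [Fintype.sum_sum_type]
  simp [Finset.sum_neg_distrib]

lemma ip_row3 (x : X) (u1 : U1) (y : EuclideanSpace ℝ (U2 ⊕ X)) :
    ip (aRow c (.inr (.inl (x, u1)))) y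
      = -(dotc c x u1 (fun u2 => y (.inl u2))) + y (.inr x) := by
  unfold ip aRow dotc
  rw [Fintype.sum_sum_type]
  simp [ite_mul, Finset.sum_ite_eq', Finset.sum_neg_distrib, neg_mul]

lemma ip_row4 (x : X) (y : EuclideanSpace ℝ (U2 ⊕ X)) :
    ip (aRow c (.inr (.inr x))) y = -(y (.inr x)) := by
  unfold ip aRow
  rw [Fintype.sum_sum_type]
  simp [ite_mul, Finset.sum_ite_eq']

lemma Q_iff (y : EuclideanSpace ℝ (U2 ⊕ X)) :
    memP (aRow c) (bRow c) y ↔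
      ((∀ u2, 0 ≤ y (.inl u2)) ∧ (∑ u2, y (.inl u2)) = 1 ∧
        (∀ x u1, y (.inr x) ≤ dotc c x u1 (fun u2 => y (.inl u2))) ∧
        (∀ x, -Mc c ≤ y (.inr x))) := by
  constructor
  · intro h
    refine ⟨fun u2 => ?_, ?_, fun x u1 => ?_, fun x => ?_⟩
    · have := h (.inl (.inl u2)); rw [ip_row1] at this; simp only [bRow] at this; linarith
    · have h1 := h (.inl (.inr true)); rw [ip_row2t] at h1; simp only [bRow] at h1
      have h2 := h (.inl (.inr false)); rw [ip_row2f] at h2; simp only [bRow] at h2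
      linarith
    · have := h (.inr (.inl (x, u1))); rw [ip_row3] at this; simp only [bRow] at this; linarith
    · have := h (.inr (.inr x)); rw [ip_row4] at this; simp only [bRow] at this; linarith
  · rintro ⟨h1, h2, h3, h4⟩ i
    match i with
    | .inl (.inl u2) => rw [ip_row1]; simp only [bRow]; linarith [h1 u2]
    | .inl (.inr true) => rw [ip_row2t]; simp only [bRow]; linarith
    | .inl (.inr false) => rw [ip_row2f]; simp only [bRow]; linarith
    | .inr (.inl (x, u1)) => rw [ip_row3]; simp only [bRow]; linarith [h3 x u1]
    | .inr (.inr x) => rw [ip_row4]; simp only [bRow]; linarith [h4 x]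

lemma Q_bounded : Bornology.IsBounded {y : EuclideanSpace ℝ (U2 ⊕ X) | memP (aRow c) (bRow c) y} := by
  rw [isBounded_iff_forall_norm_le]
  refine ⟨Real.sqrt (Fintype.card (U2 ⊕ X) * (1 + Mc c) ^ 2), ?_⟩
  intro y hy
  rw [Set.mem_setOf_eq, Q_iff] at hy
  obtain ⟨h1, h2, h3, h4⟩ := hy
  have hγ2 : (fun u2 => y (.inl u2)) ∈ probSet U2 := ⟨h1, h2⟩
  have hcoord : ∀ j : U2 ⊕ X, ‖y j‖ ≤ 1 + Mc c := by
    intro j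
    rw [Real.norm_eq_abs]
    match j with
    | .inl u2 =>
      rw [abs_le]
      constructor
      · linarith [h1 u2, Mc_nonneg (c := c)]
      · linarith [prob_le_one hγ2 u2, Mc_nonneg (c := c)]
    | .inr x =>
      obtain ⟨u1⟩ := (inferInstance : Nonempty U1)
      have h5 := h3 x u1
      have h6 := abs_dotc_le (c := c) hγ2 x u1
      rw [abs_le] at h6 ⊢
      constructor
      · linarith [h4 x]
      · linarith [h6.2]
  rw [EuclideanSpace.norm_eq]
  apply Real.sqrt_le_sqrt
  calc ∑ j, ‖y j‖ ^ 2 ≤ ∑ _j : U2 ⊕ X, (1 + Mc c) ^ 2 :=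
        Finset.sum_le_sum fun j _ => pow_le_pow_left₀ (norm_nonneg _) (hcoord j) 2
  _ = Fintype.card (U2 ⊕ X) * (1 + Mc c) ^ 2 := by
      rw [Finset.sum_const, Finset.card_univ, nsmul_eq_mul]

variable (c) in
noncomputable def yOf (γ2 : U2 → ℝ) : EuclideanSpace ℝ (U2 ⊕ X) :=
  WithLp.toLp 2 (Sum.elim γ2 (fun x => mMin c x γ2))

lemma yOf_mem {γ2 : U2 → ℝ} (hγ2 : γ2 ∈ probSet U2) : memP (aRow c) (bRow c) (yOf c γ2) := by
  rw [Q_iff]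
  refine ⟨fun u2 => hγ2.1 u2, hγ2.2, fun x u1 => ?_, fun x => ?_⟩
  · show mMin c x γ2 ≤ dotc c x u1 _
    exact mMin_le_dotc x γ2 u1
  · show -Mc c ≤ mMin c x γ2
    have := abs_mMin_le (c := c) hγ2 x
    rw [abs_le] at this
    linarith [this.1]

lemma Q_nonempty : ∃ y, memP (aRow c) (bRow c) y :=
  ⟨yOf c _, yOf_mem (uniform_mem_prob U2)⟩

noncomputable def wRow (π : X → ℝ) : EuclideanSpace ℝ (U2 ⊕ X) :=
  WithLp.toLp 2 (Sum.elim (fun _ => 0) π)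

lemma ip_wRow (π : X → ℝ) (y : EuclideanSpace ℝ (U2 ⊕ X)) :
    ip (wRow (U2 := U2) π) y = ∑ x, π x * y (.inr x) := by
  unfold ip wRow
  rw [Fintype.sum_sum_type]
  simp

variable (c) in
noncomputable def AFin : Finset (X → ℝ) :=
  ((cand (aRow c) (bRow c)).filter (fun y => memP (aRow c) (bRow c) y)).image
    (fun y => fun x : X => y (.inr x))

lemma AFin_nonempty : (AFin c).Nonempty := by
  obtain ⟨y, hyQ, _, S, hS, htight⟩ :=
    exists_max_vertex (Q_bounded (c := c)) (Q_nonempty (c := c)) 0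
  exact ⟨_, Finset.mem_image_of_mem _ (Finset.mem_filter.mpr
    ⟨mem_cand S hS htight, hyQ⟩)⟩

end Assembly

end Stmt12

/-- The stage Bayesian zero-sum game (minimizer observes `x ~ π` and picks
`γ1 : X → Δ(U1)`, maximizer picks `γ2 ∈ Δ(U2)`) has a value, and the value is a
piecewise linear convex function of `π`: a maximum of finitely many linear
functions of `π`. -/
theorem stmt_12 {X U1 U2 : Type*} [Fintype X] [Fintype U1] [Fintype U2]
    [Nonempty X] [Nonempty U1] [Nonempty U2]
    (c : X → U1 → U2 → ℝ) :
    ∃ (A : Finset (X → ℝ)) (hA : A.Nonempty),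
      ∀ π ∈ probSet X,
        ((⨅ γ1 : prescSet X U1, ⨆ γ2 : probSet U2, bayesCost c π γ1 γ2) =
          ⨆ γ2 : probSet U2, ⨅ γ1 : prescSet X U1, bayesCost c π γ1 γ2) ∧
        ((⨅ γ1 : prescSet X U1, ⨆ γ2 : probSet U2, bayesCost c π γ1 γ2) =
          A.sup' hA fun ℓ => ∑ x, ℓ x * π x) := by

  classical
  refine ⟨Stmt12.AFin c, Stmt12.AFin_nonempty, fun π hπ => ?_⟩
  have hmm := Stmt12.minimax (c := c) hπ
  refine ⟨hmm, ?_⟩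
  rw [hmm]
  obtain ⟨ym, hymQ, hymMax, S, hS, htight⟩ :=
    Stmt12.exists_max_vertex (Stmt12.Q_bounded (c := c)) (Stmt12.Q_nonempty (c := c))
      (Stmt12.wRow π)
  have hymA : (fun x : X => ym (.inr x)) ∈ Stmt12.AFin c :=
    Finset.mem_image_of_mem _ (Finset.mem_filter.mpr ⟨Stmt12.mem_cand S hS htight, hymQ⟩)
  apply le_antisymm
  · refine ciSup_le fun γ2 => ?_
    rw [Stmt12.innerInf_eq hπ (γ2 : U2 → ℝ)]
    have hy1 : Stmt12.ip (Stmt12.wRow π) (Stmt12.yOf c γ2)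
        = ∑ x, π x * Stmt12.mMin c x (γ2 : U2 → ℝ) := by
      rw [Stmt12.ip_wRow]; rfl
    calc ∑ x, π x * Stmt12.mMin c x (γ2 : U2 → ℝ)
        = Stmt12.ip (Stmt12.wRow π) (Stmt12.yOf c γ2) := hy1.symm
    _ ≤ Stmt12.ip (Stmt12.wRow π) ym := hymMax _ (Stmt12.yOf_mem γ2.2)
    _ = ∑ x, π x * ym (.inr x) := Stmt12.ip_wRow π ym
    _ = ∑ x, ym (.inr x) * π x := Finset.sum_congr rfl fun x _ => mul_comm _ _
    _ ≤ _ := Finset.le_sup' (f := fun ℓ : X → ℝ => ∑ x, ℓ x * π x) hymA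
  · refine Finset.sup'_le _ _ fun ℓ hℓ => ?_
    obtain ⟨y, hyfil, rfl⟩ := Finset.mem_image.mp hℓ
    obtain ⟨hycand, hyQ⟩ := Finset.mem_filter.mp hyfil
    rw [Stmt12.Q_iff] at hyQ
    obtain ⟨h1, h2, h3, h4⟩ := hyQ
    have hγ2 : (fun u2 => y (.inl u2)) ∈ probSet U2 := ⟨h1, h2⟩
    have hle : ∑ x, (fun x : X => y (.inr x)) x * π x
        ≤ ∑ x, π x * Stmt12.mMin c x (fun u2 => y (.inl u2)) := by
      apply Finset.sum_le_sum; intro x _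
      rw [mul_comm]
      exact mul_le_mul_of_nonneg_left (Stmt12.le_mMin fun u1 => h3 x u1) (hπ.1 x)
    rw [← Stmt12.innerInf_eq hπ] at hle
    exact hle.trans (le_ciSup (Stmt12.bddAbove_inner hπ) ⟨_, hγ2⟩)
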